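/- For every integer d ≥ 1, the d-dimensional hypercube graph Q_d has edge expansion at least 1: for every nonempty proper subset S of {0,1}^d, |∂S| ≥ min(|S|, 2^d − |S|). -/

import Mathlib

open Set Pointwise

noncomputable section

/-- The graph of a polytope `P`: vertices are the extreme points of `P`, and two distinct
extreme points are adjacent exactly when the closed segment between them is an extreme
subset (a face) of `P`. -/
def polyGraph {d : ℕ} (P : Set (Fin d → ℝ)) :
    SimpleGraph {x : Fin d → ℝ // x ∈ Set.extremePoints ℝ P} where
  Adj u v := u ≠ v ∧ IsExtreme ℝ P (segment ℝ u.1 v.1)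
  symm := by
    constructor
    rintro u v ⟨h1, h2⟩
    refine ⟨h1.symm, ?_⟩
    rwa [segment_symm]
  loopless := by constructor; rintro u ⟨h1, _⟩; exact h1 rfl

/-- The set `∂S` of edges of a graph with exactly one endpoint in `S`. -/
def edgeCut {V : Type*} (G : SimpleGraph V) (S : Set V) : Set (Sym2 V) :=
  {e | e ∈ G.edgeSet ∧ ∃ u v, u ∈ S ∧ v ∉ S ∧ e = s(u, v)}

/-- The `d`-dimensional hypercube graph on vertex set `{0,1}^d`: two vertices are adjacent
exactly when they differ in exactly one coordinate. -/
def cubeGraph (d : ℕ) : SimpleGraph (Fin d → Bool) where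
  Adj x y := {i | x i ≠ y i}.ncard = 1
  symm := by
    constructor
    intro x y h
    have hxy : {i | y i ≠ x i} = {i | x i ≠ y i} := by ext i; simp [ne_comm]
    simpa [hxy] using h
  loopless := by constructor; intro x h; simp at h

section Aux

open Classical in
private def wseq {d : ℕ} (u v : Fin d → Bool) (k : ℕ) : Fin d → Bool :=
  fun i => if (i : ℕ) < k then v i else u i

variable {d : ℕ}

private lemma wseq_zero (u v : Fin d → Bool) : wseq u v 0 = u := by
  funext i; simp [wseq]

private lemma wseq_top (u v : Fin d → Bool) : wseq u v d = v := by
  funext i; simp [wseq, i.isLt]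

private lemma exists_cross {P : ℕ → Prop} {n : ℕ} (h0 : P 0) (hn : ¬ P n) :
    ∃ k, k < n ∧ P k ∧ ¬ P (k + 1) := by
  by_contra h
  push_neg at h
  apply hn
  have key : ∀ m, m ≤ n → P m := by
    intro m hm
    induction m with
    | zero => exact h0
    | succ k ih => exact h k (by omega) (ih (by omega))
  exact key n le_rfl

open Classical in
private def cutMap (S : Set (Fin d → Bool)) (p : (Fin d → Bool) × (Fin d → Bool)) :
    Sym2 (Fin d → Bool) :=
  if h : ∃ k, k < d ∧ wseq p.1 p.2 k ∈ S ∧ wseq p.1 p.2 (k + 1) ∉ S then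
    s(wseq p.1 p.2 h.choose, wseq p.1 p.2 (h.choose + 1))
  else s(p.1, p.2)

private lemma cutMap_spec {S : Set (Fin d → Bool)} {p : (Fin d → Bool) × (Fin d → Bool)}
    (h : ∃ k, k < d ∧ wseq p.1 p.2 k ∈ S ∧ wseq p.1 p.2 (k + 1) ∉ S) :
    ∃ (k : Fin d) (a b : Fin d → Bool), cutMap S p = s(a, b) ∧ a ∈ S ∧ b ∉ S ∧
      (∀ j : Fin d, j ≠ k → a j = b j) ∧ a k ≠ b k ∧
      (∀ j : Fin d, (k : ℕ) ≤ (j : ℕ) → a j = p.1 j) ∧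
      (∀ j : Fin d, (j : ℕ) < (k : ℕ) → a j = p.2 j) ∧
      (∀ j : Fin d, (j : ℕ) ≤ (k : ℕ) → b j = p.2 j) ∧
      (∀ j : Fin d, (k : ℕ) < (j : ℕ) → b j = p.1 j) := by
  classical
  obtain ⟨hk, haS, hbS⟩ := h.choose_spec
  set k0 := h.choose with hk0
  set a := wseq p.1 p.2 k0 with ha
  set b := wseq p.1 p.2 (k0 + 1) with hb
  refine ⟨⟨k0, hk⟩, a, b, ?_, haS, hbS, ?_, ?_, ?_, ?_, ?_, ?_⟩
  · rw [cutMap, dif_pos h]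
  · -- agree off k0
    intro j hj
    have hne : (j : ℕ) ≠ k0 := fun hh => hj (Fin.ext hh)
    rcases Nat.lt_trichotomy (j : ℕ) k0 with hlt | heq | hgt
    · rw [ha, hb]; unfold wseq
      rw [if_pos hlt, if_pos (by omega)]
    · exact absurd heq hne
    · rw [ha, hb]; unfold wseq
      rw [if_neg (by omega), if_neg (by omega)]
  · -- a k ≠ b k
    intro hab
    apply hbS
    have hba : b = a := by
      funext j
      by_cases hj : j = (⟨k0, hk⟩ : Fin d)
      · subst hj; exact hab.symm
      · have hne : (j : ℕ) ≠ k0 := fun hh => hj (Fin.ext hh)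
        rcases Nat.lt_trichotomy (j : ℕ) k0 with hlt | heq | hgt
        · rw [ha, hb]; unfold wseq
          rw [if_pos hlt, if_pos (by omega)]
        · exact absurd heq hne
        · rw [ha, hb]; unfold wseq
          rw [if_neg (by omega), if_neg (by omega)]
    rwa [hba]
  · intro j hjk; rw [ha]; unfold wseq; rw [if_neg (by simpa using Nat.not_lt.2 hjk)]
  · intro j hjk; rw [ha]; unfold wseq; rw [if_pos hjk]
  · intro j hjk; have hjk' : (j : ℕ) ≤ k0 := hjk
    rw [hb]; unfold wseq; rw [if_pos (by omega)]
  · intro j hjk; have hjk' : k0 < (j : ℕ) := hjk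
    rw [hb]; unfold wseq; rw [if_neg (by omega)]

end Aux

/-- For every `d ≥ 1`, the `d`-dimensional hypercube graph has edge expansion at least
`1`: for every nonempty proper subset `S` of `{0,1}^d`, `|∂S| ≥ min(|S|, 2^d − |S|)`. -/
theorem cubeGraph_expansion (d : ℕ) (hd : 1 ≤ d) (S : Set (Fin d → Bool))
    (hS : S.Nonempty) (hS' : Sᶜ.Nonempty) :
    min S.ncard (Sᶜ).ncard ≤ (edgeCut (cubeGraph d) S).ncard := by
  classical
  have hSfin : S.Finite := S.toFinite
  have hTfin : Sᶜ.Finite := Sᶜ.toFinite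
  have hEfin : (edgeCut (cubeGraph d) S).Finite := Set.toFinite _
  set Sf := hSfin.toFinset with hSf
  set Tf := hTfin.toFinset with hTf
  set Ef := hEfin.toFinset with hEf
  set A := Sf ×ˢ Tf with hA
  have hEx : ∀ p ∈ A, ∃ k, k < d ∧ wseq p.1 p.2 k ∈ S ∧ wseq p.1 p.2 (k + 1) ∉ S := by
    intro p hp
    rw [hA, Finset.mem_product] at hp
    have h1 : p.1 ∈ S := hSfin.mem_toFinset.1 hp.1
    have h2 : p.2 ∉ S := by simpa using hTfin.mem_toFinset.1 hp.2
    exact exists_cross (P := fun k => wseq p.1 p.2 k ∈ S)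
      (by simpa [wseq_zero] using h1) (by simpa [wseq_top] using h2)
  have hmap : ∀ p ∈ A, cutMap S p ∈ Ef := by
    intro p hp
    obtain ⟨k, a, b, heq, haS, hbS, hagree, hdiff, -, -, -, -⟩ := cutMap_spec (hEx p hp)
    rw [hEf, hEfin.mem_toFinset]
    refine ⟨?_, a, b, haS, hbS, heq⟩
    rw [heq, SimpleGraph.mem_edgeSet]
    show {i | a i ≠ b i}.ncard = 1
    have hset : {i | a i ≠ b i} = {k} := by
      ext j
      simp only [Set.mem_setOf_eq, Set.mem_singleton_iff]
      constructor
      · intro hj; by_contra hjk; exact hj (hagree j hjk)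
      · intro hj; subst hj; exact hdiff
    rw [hset, Set.ncard_singleton]
  have hfib : ∀ e ∈ Ef, (A.filter fun p => cutMap S p = e).card ≤ 2 ^ (d - 1) := by
    intro e _
    by_cases hne : (A.filter fun p => cutMap S p = e).Nonempty
    · obtain ⟨p₀, hp₀⟩ := hne
      rw [Finset.mem_filter] at hp₀
      obtain ⟨k, a, b, heq, haS, hbS, hagree, hdiff, -, -, -, -⟩ := cutMap_spec (hEx p₀ hp₀.1)
      have hea : e = s(a, b) := hp₀.2 ▸ heq
      have hcard : (Finset.univ : Finset ({j : Fin d // j ≠ k} → Bool)).card = 2 ^ (d - 1) := by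
        rw [Finset.card_univ, Fintype.card_fun, Fintype.card_bool]
        congr 1
        have : Fintype.card {j : Fin d // j ≠ k} = d - 1 := by
          simp [Fintype.card_subtype_compl, Fintype.card_subtype_eq]
        omega
      rw [← hcard]
      apply Finset.card_le_card_of_injOn
        (fun p => fun j : {j : Fin d // j ≠ k} =>
          if (j.1 : ℕ) < (k : ℕ) then p.1 j.1 else p.2 j.1)
        (fun _ _ => Finset.mem_univ _)
      intro p hp q hq hgeq
      simp only [Finset.coe_filter, Set.mem_setOf_eq] at hp hq
      obtain ⟨hpA, hpe⟩ := hp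
      obtain ⟨hqA, hqe⟩ := hq
      obtain ⟨kp, ap, bp, heqp, hapS, hbpS, hagp, hdifp, hap1, hap2, hbp1, hbp2⟩ :=
        cutMap_spec (hEx p hpA)
      obtain ⟨kq, aq, bq, heqq, haqS, hbqS, hagq, hdifq, haq1, haq2, hbq1, hbq2⟩ :=
        cutMap_spec (hEx q hqA)
      have hpab : s(ap, bp) = s(a, b) := by rw [← heqp, hpe, hea]
      have hqab : s(aq, bq) = s(a, b) := by rw [← heqq, hqe, hea]
      rw [Sym2.eq_iff] at hpab hqab
      have hpab' : ap = a ∧ bp = b := by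
        rcases hpab with h | h
        · exact h
        · exact absurd (h.1 ▸ hapS) hbS
      have hqab' : aq = a ∧ bq = b := by
        rcases hqab with h | h
        · exact h
        · exact absurd (h.1 ▸ haqS) hbS
      have hkp : kp = k := by
        by_contra hne'
        have : a kp ≠ b kp := by rw [← hpab'.1, ← hpab'.2]; exact hdifp
        exact this (hagree kp hne')
      have hkq : kq = k := by
        by_contra hne'
        have : a kq ≠ b kq := by rw [← hqab'.1, ← hqab'.2]; exact hdifq
        exact this (hagree kq hne')
      rw [hkp] at hap1 hbp1
      rw [hkq] at haq1 hbq1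
      have h1 : p.1 = q.1 := by
        funext j
        by_cases hjk : (j : ℕ) < (k : ℕ)
        · have hj : j ≠ k := fun h => by subst h; omega
          have := congrFun hgeq ⟨j, hj⟩
          simpa [hjk] using this
        · have hjk' : (k : ℕ) ≤ (j : ℕ) := Nat.not_lt.1 hjk
          rw [← hap1 j hjk', ← haq1 j hjk', hpab'.1, hqab'.1]
      have h2 : p.2 = q.2 := by
        funext j
        by_cases hjk : (k : ℕ) < (j : ℕ)
        · have hj : j ≠ k := fun h => by subst h; omega
          have := congrFun hgeq ⟨j, hj⟩
          simpa [Nat.not_lt.2 (Nat.le_of_lt hjk)] using this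
        · have hjk' : (j : ℕ) ≤ (k : ℕ) := Nat.not_lt.1 hjk
          rw [← hbp1 j hjk', ← hbq1 j hjk', hpab'.2, hqab'.2]
      exact Prod.ext h1 h2
    · rw [Finset.not_nonempty_iff_eq_empty] at hne
      simp [hne]
  have key : A.card ≤ 2 ^ (d - 1) * Ef.card :=
    Finset.card_le_mul_card_image_of_maps_to hmap _ hfib
  have hAcard : A.card = Sf.card * Tf.card := Finset.card_product Sf Tf
  have hs : S.ncard = Sf.card := Set.ncard_eq_toFinset_card _ hSfin
  have ht : (Sᶜ).ncard = Tf.card := Set.ncard_eq_toFinset_card _ hTfin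
  have he : (edgeCut (cubeGraph d) S).ncard = Ef.card := Set.ncard_eq_toFinset_card _ hEfin
  have hsum : Sf.card + Tf.card = 2 ^ d := by
    rw [← hs, ← ht, Set.ncard_add_ncard_compl]
    simp [Nat.card_eq_fintype_card]
  have hmax : 2 ^ (d - 1) ≤ max Sf.card Tf.card := by
    have h2 : 2 * 2 ^ (d - 1) = 2 ^ d := by
      rw [← pow_succ']
      congr 1
      omega
    have l1 : Sf.card ≤ max Sf.card Tf.card := le_max_left _ _
    have l2 : Tf.card ≤ max Sf.card Tf.card := le_max_right _ _
    omega
  have hfin : min Sf.card Tf.card * 2 ^ (d - 1) ≤ 2 ^ (d - 1) * Ef.card := by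
    calc min Sf.card Tf.card * 2 ^ (d - 1)
        ≤ min Sf.card Tf.card * max Sf.card Tf.card := Nat.mul_le_mul_left _ hmax
      _ = Sf.card * Tf.card := min_mul_max _ _
      _ = A.card := hAcard.symm
      _ ≤ 2 ^ (d - 1) * Ef.card := key
  have hpos : 0 < 2 ^ (d - 1) := by positivity
  rw [hs, ht, he]
  rw [mul_comm] at hfin
  exact Nat.le_of_mul_le_mul_left hfin hpos
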